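/- For $0 \leq r \leq 1$ and all real $\theta$, the sum $P(r,\theta) := \sum_{j=1}^J (1 - j/(J+1)) r^j \cos(j\theta)$ satisfies $P(r,\theta) \geq -1/2$. -/

import Mathlib

open Finset Complex


/-- For a positive integer `J`, `P(r,θ) = ∑_{j=1}^J (1 - j/(J+1)) r^j cos(jθ)`
satisfies `P(r,θ) ≥ -1/2` for `0 ≤ r ≤ 1` and all `θ`. -/
theorem power_sum_kernel_lower_bound (J : ℕ) (hJ : 1 ≤ J) (r θ : ℝ)
    (hr0 : 0 ≤ r) (hr1 : r ≤ 1) :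
    (∑ j ∈ Finset.Icc 1 J, (1 - (j : ℝ) / (J + 1)) * r ^ j * Real.cos (j * θ))
      ≥ -(1 / 2) := by
  set ρ : ℂ := (r : ℂ) * Complex.exp (θ * Complex.I) with hρ
  have hre : ∀ m : ℕ, (ρ ^ m).re = r ^ m * Real.cos (m * θ) := by
    intro m
    rw [hρ, mul_pow, ← Complex.ofReal_pow, ← Complex.exp_nat_mul]
    rw [show (m : ℂ) * (↑θ * Complex.I) = ↑((m : ℝ) * θ) * Complex.I by push_cast; ring]
    rw [Complex.re_ofReal_mul, Complex.exp_ofReal_mul_I_re]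
  have hnsρ : Complex.normSq ρ = r ^ 2 := by
    simp [hρ, Complex.normSq_mul, Complex.normSq_eq_norm_sq, Complex.norm_exp_ofReal_mul_I]
  set G : ℕ → ℂ := fun n => ∑ k ∈ Finset.range (n + 1), ρ ^ k with hG
  have key : ∀ n : ℕ,
      Complex.normSq (G n) + (1 - r ^ 2) * ∑ m ∈ Finset.range n, Complex.normSq (G m)
        = ((n : ℝ) + 1)
          + 2 * ∑ m ∈ Finset.range n, ((n : ℝ) - m) * r ^ (m + 1) * Real.cos ((m + 1) * θ) := by
    intro n
    induction n with
    | zero => simp [hG]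
    | succ n ih =>
      have hGs : G (n + 1) = ρ * G n + 1 := by
        simp only [hG]
        rw [geom_sum_succ]
      have hns : Complex.normSq (G (n + 1))
          = r ^ 2 * Complex.normSq (G n) + 1 + 2 * (ρ * G n).re := by
        rw [hGs, Complex.normSq_add, Complex.normSq_mul, hnsρ]
        simp
      have hreG : (ρ * G n).re
          = ∑ k ∈ Finset.range (n + 1), r ^ (k + 1) * Real.cos ((k + 1) * θ) := by
        rw [hG]
        rw [Finset.mul_sum, Complex.re_sum]
        refine Finset.sum_congr rfl fun k _ => ?_
        rw [← pow_succ']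
        push_cast [hre (k + 1)]
        ring_nf
      rw [Finset.sum_range_succ (fun m => Complex.normSq (G m)), hns, hreG]
      have expand : ∑ m ∈ Finset.range (n + 1),
            ((n : ℝ) + 1 - m) * r ^ (m + 1) * Real.cos ((m + 1) * θ)
          = (∑ m ∈ Finset.range n, ((n : ℝ) - m) * r ^ (m + 1) * Real.cos ((m + 1) * θ))
            + ∑ m ∈ Finset.range (n + 1), r ^ (m + 1) * Real.cos ((m + 1) * θ) := by
        have : ∑ m ∈ Finset.range (n + 1),
              ((n : ℝ) + 1 - m) * r ^ (m + 1) * Real.cos ((m + 1) * θ)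
            = ∑ m ∈ Finset.range (n + 1),
              (((n : ℝ) - m) * r ^ (m + 1) * Real.cos ((m + 1) * θ)
                + r ^ (m + 1) * Real.cos ((m + 1) * θ)) := by
          refine Finset.sum_congr rfl fun m _ => ?_
          ring
        rw [this, Finset.sum_add_distrib,
          Finset.sum_range_succ (fun m => ((n : ℝ) - m) * r ^ (m + 1) * Real.cos ((m + 1) * θ))]
        simp
      push_cast
      rw [expand]
      linarith [ih]
  -- now use key at n = J
  have hJ1 : (0 : ℝ) < (J : ℝ) + 1 := by positivity
  have hsum : (∑ j ∈ Finset.Icc 1 J, (1 - (j : ℝ) / (J + 1)) * r ^ j * Real.cos (j * θ))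
      = (1 / ((J : ℝ) + 1)) *
        ∑ m ∈ Finset.range J, ((J : ℝ) - m) * r ^ (m + 1) * Real.cos ((m + 1) * θ) := by
    rw [Finset.mul_sum]
    rw [← Finset.Ico_add_one_right_eq_Icc, Finset.sum_Ico_eq_sum_range]
    refine Finset.sum_congr rfl fun m hm => ?_
    push_cast
    field_simp
    ring_nf
  have hpos : 0 ≤ ((J : ℝ) + 1)
      + 2 * ∑ m ∈ Finset.range J, ((J : ℝ) - m) * r ^ (m + 1) * Real.cos ((m + 1) * θ) := by
    rw [← key J]
    have h1 : 0 ≤ Complex.normSq (G J) := Complex.normSq_nonneg _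
    have h2 : 0 ≤ (1 - r ^ 2) * ∑ m ∈ Finset.range J, Complex.normSq (G m) := by
      apply mul_nonneg
      · nlinarith
      · exact Finset.sum_nonneg fun m _ => Complex.normSq_nonneg _
    linarith
  rw [hsum]
  rw [ge_iff_le, ← sub_nonneg]
  have : (1 / ((J : ℝ) + 1)) *
        ∑ m ∈ Finset.range J, ((J : ℝ) - m) * r ^ (m + 1) * Real.cos ((m + 1) * θ)
      - -(1/2)
      = (1 / (2 * ((J : ℝ) + 1))) * (((J : ℝ) + 1)
        + 2 * ∑ m ∈ Finset.range J, ((J : ℝ) - m) * r ^ (m + 1) * Real.cos ((m + 1) * θ)) := by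
    generalize (∑ m ∈ Finset.range J, ((J : ℝ) - m) * r ^ (m + 1) * Real.cos ((m + 1) * θ)) = S
    field_simp
    ring
  rw [this]
  positivity
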